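/- Let P, Q be simple polytopes of dimensions n₁, n₂ with m₁, m₂ facets. Then s(P) + s(Q) ≤ s(P × Q) ≤ s(P) + s(Q) + min{m₁ − n₁ − s(P), m₂ − n₂ − s(Q)}, where s denotes the Buchstaber number in its matrix characterization: s(P) is the maximal s admitting an m×s integer matrix such that for each vertex, the columns of the matrix with the n rows of that vertex's facets deleted extend to a basis of Z^{m-n}. -/

import Mathlib

/-- A family of vectors is part of a basis if it can be extended to a basis. -/
def IsPartOfBasis (R : Type) [Semiring R] {M : Type} [AddCommMonoid M] [Module R M]
    {ι : Type} (v : ι → M) : Prop :=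
  ∃ (κ : Type) (b : Module.Basis (ι ⊕ κ) R M), ∀ i, b (Sum.inl i) = v i

/-- Buchstaber number in the matrix characterization. -/
noncomputable def buch (ι : Type) [Fintype ι] [DecidableEq ι]
    (verts : Finset (Finset ι)) : ℕ :=
  sSup {s : ℕ | s ≤ Fintype.card ι ∧ ∃ M : ι → Fin s → ℤ,
    ∀ V ∈ verts, IsPartOfBasis ℤ (fun j : Fin s => fun i : {i : ι // i ∉ V} => M i.1 j)}

/-- The vertices of the product polytope `P × Q`: pairs of vertices. -/
noncomputable def prodVerts (m₁ m₂ : ℕ) (vertsP : Finset (Finset (Fin m₁)))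
    (vertsQ : Finset (Finset (Fin m₂))) : Finset (Finset (Fin m₁ ⊕ Fin m₂)) :=
  (vertsP ×ˢ vertsQ).image
    (fun p => p.1.map ⟨Sum.inl, Sum.inl_injective⟩ ∪ p.2.map ⟨Sum.inr, Sum.inr_injective⟩)

/- ================= Auxiliary lemmas ================= -/

lemma isPartOfBasis_iff {α : Type} [Fintype α] [DecidableEq α] {s : ℕ}
    (v : Fin s → (α → ℤ)) :
    IsPartOfBasis ℤ v ↔
      ∃ g : (α → ℤ) →ₗ[ℤ] (Fin s → ℤ), ∀ j, g (v j) = Pi.single j 1 := by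
  constructor
  · rintro ⟨κ, b, hb⟩
    refine ⟨LinearMap.pi (fun j => Finsupp.lapply (Sum.inl j) ∘ₗ b.repr.toLinearMap),
      fun j => ?_⟩
    funext j'
    simp only [LinearMap.pi_apply, LinearMap.comp_apply, LinearEquiv.coe_coe, ← hb j,
      Module.Basis.repr_self, Finsupp.lapply_apply, Finsupp.single_apply, Pi.single_apply]
    classical
    rw [Finsupp.single_apply]
    simp [eq_comm]
  · rintro ⟨g, hg⟩
    set vL : (Fin s → ℤ) →ₗ[ℤ] (α → ℤ) := Fintype.linearCombination ℤ v with hvL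
    have hgv : ∀ c, g (vL c) = c := by
      intro c
      rw [hvL, Fintype.linearCombination_apply, map_sum]
      have : ∀ x : Fin s, c x • (Pi.single x (1:ℤ) : Fin s → ℤ) = Pi.single x (c x) := by
        intro x; rw [← Pi.single_smul]; norm_num
      simp only [map_smul, hg, this]
      exact Finset.univ_sum_single c
    have hvLs : ∀ j, vL (Pi.single j 1) = v j := by
      intro j; rw [hvL, Fintype.linearCombination_apply_single, one_smul]
    set K := LinearMap.ker g with hK
    have hmem : ∀ x, x - vL (g x) ∈ K := by
      intro x; simp [hK, LinearMap.mem_ker, map_sub, hgv]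
    set f : (α → ℤ) →ₗ[ℤ] (Fin s → ℤ) × K :=
      LinearMap.prod g (LinearMap.codRestrict K (LinearMap.id - vL ∘ₗ g) hmem) with hf
    set f' : (Fin s → ℤ) × K →ₗ[ℤ] (α → ℤ) := LinearMap.coprod vL K.subtype with hf'
    have h1 : f ∘ₗ f' = LinearMap.id := by
      apply LinearMap.ext; rintro ⟨c, ⟨k, hk⟩⟩
      have hgk : g k = 0 := hk
      apply Prod.ext
      · simp [hf, hf', hgv, hgk]
      · apply Subtype.ext
        have hc : g (vL c + k) = c := by rw [map_add, hgv, hgk, add_zero]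
        show (vL c + k) - vL (g (vL c + k)) = k
        rw [hc]; abel
    have h2 : f' ∘ₗ f = LinearMap.id := by
      apply LinearMap.ext; intro x
      simp [hf, hf']
    set e := LinearEquiv.ofLinear f f' h1 h2 with he
    refine ⟨Module.Free.ChooseBasisIndex ℤ K,
      ((Pi.basisFun ℤ (Fin s)).prod (Module.Free.chooseBasis ℤ K)).map e.symm, fun j => ?_⟩
    have hpb : ((Pi.basisFun ℤ (Fin s)).prod (Module.Free.chooseBasis ℤ K)) (Sum.inl j)
        = (Pi.single j 1, 0) := by
      rw [Module.Basis.prod_apply]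
      simp [Pi.basisFun_apply]
    rw [Module.Basis.map_apply, hpb]
    show f' (Pi.single j 1, 0) = v j
    simp [hf', hvLs]

lemma exists_kernel_compression {s : ℕ} {γ : Type} [Fintype γ]
    (β : (Fin s → ℤ) →ₗ[ℤ] (γ → ℤ)) :
    ∃ (t : ℕ) (k : Fin t → (Fin s → ℤ)) (coord : (Fin s → ℤ) →ₗ[ℤ] (Fin t → ℤ)),
      s ≤ t + Fintype.card γ ∧ (∀ j, β (k j) = 0) ∧ ∀ j, coord (k j) = Pi.single j 1 := by
  classical
  set K := LinearMap.ker β with hKdef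
  haveI : Module.Free ℤ ((Fin s → ℤ) ⧸ K) :=
    Module.Free.of_equiv (LinearMap.quotKerEquivRange β).symm
  obtain ⟨σ, hσ⟩ := Module.projective_lifting_property K.mkQ LinearMap.id K.mkQ_surjective
  have hσ' : ∀ q, K.mkQ (σ q) = q := fun q => by
    rw [← LinearMap.comp_apply, hσ, LinearMap.id_apply]
  have hmem : ∀ x, ((LinearMap.id : (Fin s → ℤ) →ₗ[ℤ] (Fin s → ℤ)) - σ ∘ₗ K.mkQ) x ∈ K := by
    intro x
    have h0 : K.mkQ (((LinearMap.id : (Fin s → ℤ) →ₗ[ℤ] (Fin s → ℤ)) - σ ∘ₗ K.mkQ) x) = 0 := by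
      simp [map_sub, hσ']
    rwa [← LinearMap.mem_ker, Submodule.ker_mkQ] at h0
  set π : (Fin s → ℤ) →ₗ[ℤ] K := LinearMap.codRestrict K _ hmem with hπdef
  have hπK : ∀ kk : K, π kk = kk := by
    rintro ⟨x, hx⟩
    apply Subtype.ext
    have : K.mkQ x = 0 := by rwa [← LinearMap.mem_ker, Submodule.ker_mkQ]
    show x - σ (K.mkQ x) = x
    rw [this, map_zero, sub_zero]
  set t := Module.finrank ℤ K with ht
  set kb := Module.finBasis ℤ K with hkb
  refine ⟨t, fun j => (kb j : Fin s → ℤ), kb.equivFun.toLinearMap ∘ₗ π, ?_, ?_, ?_⟩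
  · have hπσ : ∀ q, π (σ q) = 0 := by
      intro q
      apply Subtype.ext
      show σ q - σ (K.mkQ (σ q)) = 0
      rw [hσ', sub_self]
    have h1 : (LinearMap.prod π K.mkQ) ∘ₗ (LinearMap.coprod K.subtype σ) = LinearMap.id := by
      apply LinearMap.ext; rintro ⟨kk, q⟩
      have : K.mkQ kk = 0 := by
        rw [← LinearMap.mem_ker, Submodule.ker_mkQ]; exact kk.2
      apply Prod.ext
      · show π (kk + σ q) = kk
        rw [map_add, hπK, hπσ, add_zero]
      · show K.mkQ (kk + σ q) = q
        rw [map_add, this, hσ', zero_add]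
    have h2 : (LinearMap.coprod K.subtype σ) ∘ₗ (LinearMap.prod π K.mkQ) = LinearMap.id := by
      apply LinearMap.ext; intro x
      show (x - σ (K.mkQ x)) + σ (K.mkQ x) = x
      abel
    have e : (Fin s → ℤ) ≃ₗ[ℤ] K × ((Fin s → ℤ) ⧸ K) :=
      LinearEquiv.ofLinear (LinearMap.prod π K.mkQ) (LinearMap.coprod K.subtype σ) h1 h2
    have hcount : s = t + Module.finrank ℤ ((Fin s → ℤ) ⧸ K) := by
      have := e.finrank_eq
      rwa [Module.finrank_pi, Fintype.card_fin, Module.finrank_prod] at this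
    have hle : Module.finrank ℤ ((Fin s → ℤ) ⧸ K) ≤ Fintype.card γ := by
      have h3 := (LinearMap.quotKerEquivRange β).finrank_eq
      rw [← hKdef] at h3
      have h4 := Submodule.finrank_le (LinearMap.range β)
      rw [Module.finrank_pi] at h4
      omega
    omega
  · intro j
    exact (kb j).2
  · intro j
    funext j'
    simp only [LinearMap.comp_apply, LinearEquiv.coe_coe, hπK (kb j), Module.Basis.equivFun_self]
    rw [Pi.single_apply]
    simp [eq_comm]

lemma card_le_of_leftInv {α : Type} [Fintype α] [DecidableEq α] {t : ℕ}
    (v : Fin t → (α → ℤ)) (g : (α → ℤ) →ₗ[ℤ] (Fin t → ℤ))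
    (hg : ∀ j, g (v j) = Pi.single j 1) : t ≤ Fintype.card α := by
  have hli : LinearIndependent ℤ v := by
    rw [Fintype.linearIndependent_iff]
    intro c hc j
    have h := congrArg g hc
    rw [map_sum, map_zero] at h
    simp only [map_smul, hg] at h
    have h2 : ∀ x : Fin t, c x • (Pi.single x (1:ℤ) : Fin t → ℤ) = Pi.single x (c x) := by
      intro x; rw [← Pi.single_smul]; norm_num
    rw [Finset.sum_congr rfl (fun x _ => h2 x), Finset.univ_sum_single] at h
    exact congrFun h j
  have h := hli.fintype_card_le_finrank
  rwa [Fintype.card_fin, Module.finrank_pi] at h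

lemma buch_bddAbove (ι : Type) [Fintype ι] [DecidableEq ι] (verts : Finset (Finset ι)) :
    BddAbove {s : ℕ | s ≤ Fintype.card ι ∧ ∃ M : ι → Fin s → ℤ,
      ∀ V ∈ verts, IsPartOfBasis ℤ (fun j : Fin s => fun i : {i : ι // i ∉ V} => M i.1 j)} :=
  ⟨Fintype.card ι, fun _ hx => hx.1⟩

lemma le_buch (ι : Type) [Fintype ι] [DecidableEq ι] (verts : Finset (Finset ι))
    (s : ℕ) (hs : s ≤ Fintype.card ι) (M : ι → Fin s → ℤ)
    (hM : ∀ V ∈ verts, IsPartOfBasis ℤ (fun j : Fin s => fun i : {i : ι // i ∉ V} => M i.1 j)) :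
    s ≤ buch ι verts :=
  le_csSup (buch_bddAbove ι verts) ⟨hs, M, hM⟩

lemma buch_spec (ι : Type) [Fintype ι] [DecidableEq ι] (verts : Finset (Finset ι)) :
    buch ι verts ≤ Fintype.card ι ∧ ∃ M : ι → Fin (buch ι verts) → ℤ,
      ∀ V ∈ verts, IsPartOfBasis ℤ
        (fun j : Fin (buch ι verts) => fun i : {i : ι // i ∉ V} => M i.1 j) := by
  classical
  have h0 : (0 : ℕ) ∈ {s : ℕ | s ≤ Fintype.card ι ∧ ∃ M : ι → Fin s → ℤ,
      ∀ V ∈ verts, IsPartOfBasis ℤ (fun j : Fin s => fun i : {i : ι // i ∉ V} => M i.1 j)} := by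
    refine ⟨Nat.zero_le _, fun _ _ => 0, fun V _ => ?_⟩
    exact (isPartOfBasis_iff _).mpr ⟨0, fun j => j.elim0⟩
  exact Nat.sSup_mem ⟨0, h0⟩ (buch_bddAbove ι verts)

/-- Extension by zero along a partial map. -/
def extOpt {α β : Type} (f : β → Option α) : (α → ℤ) →ₗ[ℤ] (β → ℤ) where
  toFun x b := ((f b).map x).getD 0
  map_add' x y := by
    funext b; rcases h : f b with _ | a <;> simp [h]
  map_smul' c x := by
    funext b; rcases h : f b with _ | a <;> simp [h]

lemma upper_aux {α β : Type} [Fintype α] [DecidableEq α] [Fintype β] [DecidableEq β]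
    (verts₁ : Finset (Finset α)) (W₀ : Finset β) (s : ℕ)
    (Mf : α ⊕ β → Fin s → ℤ)
    (hcond : ∀ V ∈ verts₁,
      ∃ g : ({x : α ⊕ β //
          x ∉ V.map ⟨Sum.inl, Sum.inl_injective⟩ ∪ W₀.map ⟨Sum.inr, Sum.inr_injective⟩} → ℤ)
          →ₗ[ℤ] (Fin s → ℤ),
        ∀ j, g (fun p => Mf p.1 j) = Pi.single j 1) :
    ∃ (t : ℕ) (M' : α → Fin t → ℤ), s ≤ t + Fintype.card {i : β // i ∉ W₀} ∧
      ∀ V ∈ verts₁, ∃ h : ({i : α // i ∉ V} → ℤ) →ₗ[ℤ] (Fin t → ℤ),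
        ∀ j, h (fun i => M' i.1 j) = Pi.single j 1 := by
  classical
  set βL : (Fin s → ℤ) →ₗ[ℤ] ({i : β // i ∉ W₀} → ℤ) :=
    Fintype.linearCombination ℤ (fun j => fun i : {i : β // i ∉ W₀} => Mf (Sum.inr i.1) j)
    with hβL
  obtain ⟨t, k, coord, hst, hker, hcoord⟩ := exists_kernel_compression βL
  refine ⟨t, fun i j => ∑ l, k j l * Mf (Sum.inl i) l, hst, ?_⟩
  intro V hV
  set U := V.map ⟨Sum.inl, Sum.inl_injective⟩ ∪ W₀.map ⟨Sum.inr, Sum.inr_injective⟩ with hU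
  obtain ⟨g, hg⟩ := hcond V hV
  set f : {x : α ⊕ β // x ∉ U} → Option {i : α // i ∉ V} := fun p =>
    match p with
    | ⟨Sum.inl i, h⟩ => some ⟨i, fun hi => h (Finset.mem_union_left _ (Finset.mem_map_of_mem _ hi))⟩
    | ⟨Sum.inr _, _⟩ => none
    with hfdef
  refine ⟨coord ∘ₗ g ∘ₗ extOpt f, fun j => ?_⟩
  have key : extOpt f (fun i : {i : α // i ∉ V} => ∑ l, k j l * Mf (Sum.inl i.1) l)
      = ∑ l, k j l • (fun p : {x : α ⊕ β // x ∉ U} => Mf p.1 l) := by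
    funext p
    rcases p with ⟨x, hx⟩
    have hrhs : (∑ l, k j l • (fun p : {x : α ⊕ β // x ∉ U} => Mf p.1 l)) ⟨x, hx⟩
        = ∑ l, k j l * Mf x l := by
      rw [Finset.sum_apply]; simp
    rw [hrhs]
    rcases x with i | i
    · simp only [extOpt, LinearMap.coe_mk, AddHom.coe_mk]
      simp [hfdef]
    · simp only [extOpt, LinearMap.coe_mk, AddHom.coe_mk]
      have hiW : i ∉ W₀ := fun hw => hx (Finset.mem_union_right _ (Finset.mem_map_of_mem _ hw))
      have h0 := congrFun (hker j) ⟨i, hiW⟩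
      rw [hβL, Fintype.linearCombination_apply] at h0
      rw [Finset.sum_apply] at h0
      simp only [Pi.smul_apply, smul_eq_mul] at h0
      simp [hfdef, h0]
  rw [LinearMap.comp_apply, LinearMap.comp_apply, key, map_sum]
  have h2 : ∀ l, k j l • (Pi.single l (1:ℤ) : Fin s → ℤ) = Pi.single l (k j l) := by
    intro l; rw [← Pi.single_smul]; norm_num
  have h3 : ∀ l : Fin s, g (k j l • fun p : {x : α ⊕ β // x ∉ U} => Mf p.1 l)
      = Pi.single l (k j l) := by
    intro l; rw [map_smul, hg, h2]
  rw [Finset.sum_congr rfl (fun l _ => h3 l), Finset.univ_sum_single, hcoord]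

lemma card_compl_eq {m n : ℕ} (V : Finset (Fin m)) (h : V.card = n) :
    Fintype.card {i : Fin m // i ∉ V} = m - n := by
  classical
  rw [Fintype.card_subtype_compl, Fintype.card_fin]
  congr 1
  rw [← h]
  exact Fintype.card_coe V

/-- `s(P) + s(Q) ≤ s(P × Q) ≤ s(P) + s(Q) + min{m₁-n₁-s(P), m₂-n₂-s(Q)}`. -/
theorem buchstaber_of_product (m₁ m₂ n₁ n₂ : ℕ) (hn₁ : 0 < n₁) (hn₂ : 0 < n₂)
    (vertsP : Finset (Finset (Fin m₁))) (vertsQ : Finset (Finset (Fin m₂)))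
    (hPne : vertsP.Nonempty) (hQne : vertsQ.Nonempty)
    (hP : ∀ V ∈ vertsP, V.card = n₁) (hQ : ∀ W ∈ vertsQ, W.card = n₂) :
    buch (Fin m₁) vertsP + buch (Fin m₂) vertsQ ≤
        buch (Fin m₁ ⊕ Fin m₂) (prodVerts m₁ m₂ vertsP vertsQ) ∧
      buch (Fin m₁ ⊕ Fin m₂) (prodVerts m₁ m₂ vertsP vertsQ) ≤
        buch (Fin m₁) vertsP + buch (Fin m₂) vertsQ +
          min (m₁ - n₁ - buch (Fin m₁) vertsP) (m₂ - n₂ - buch (Fin m₂) vertsQ) := by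
  classical
  obtain ⟨hPcard, MP, hMP⟩ := buch_spec (Fin m₁) vertsP
  obtain ⟨hQcard, MQ, hMQ⟩ := buch_spec (Fin m₂) vertsQ
  obtain ⟨hScard, MS, hMS⟩ := buch_spec (Fin m₁ ⊕ Fin m₂) (prodVerts m₁ m₂ vertsP vertsQ)
  rw [Fintype.card_fin] at hPcard hQcard
  obtain ⟨V₀, hV₀⟩ := hPne
  obtain ⟨W₀, hW₀⟩ := hQne
  -- membership of product vertices
  have hmemprod : ∀ V ∈ vertsP, ∀ W ∈ vertsQ,
      (V.map ⟨Sum.inl, Sum.inl_injective⟩ ∪ W.map ⟨Sum.inr, Sum.inr_injective⟩)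
        ∈ prodVerts m₁ m₂ vertsP vertsQ := by
    intro V hV W hW
    exact Finset.mem_image.mpr ⟨(V, W), Finset.mem_product.mpr ⟨hV, hW⟩, rfl⟩
  have hsPle : buch (Fin m₁) vertsP ≤ m₁ - n₁ := by
    obtain ⟨g, hg⟩ := (isPartOfBasis_iff _).mp (hMP V₀ hV₀)
    have h := card_le_of_leftInv _ g hg
    rwa [card_compl_eq V₀ (hP V₀ hV₀)] at h
  have hsQle : buch (Fin m₂) vertsQ ≤ m₂ - n₂ := by
    obtain ⟨g, hg⟩ := (isPartOfBasis_iff _).mp (hMQ W₀ hW₀)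
    have h := card_le_of_leftInv _ g hg
    rwa [card_compl_eq W₀ (hQ W₀ hW₀)] at h
  constructor
  · -- lower bound
    set MU : (Fin m₁ ⊕ Fin m₂) → Fin (buch (Fin m₁) vertsP + buch (Fin m₂) vertsQ) → ℤ :=
      fun x j =>
      Sum.elim (fun j₁ => Sum.elim (fun i => MP i j₁) (fun _ => 0) x)
        (fun j₂ => Sum.elim (fun _ => 0) (fun i => MQ i j₂) x)
        (finSumFinEquiv.symm j) with hMU
    refine le_buch _ _ _ ?_ MU ?_
    · have hcs : Fintype.card (Fin m₁ ⊕ Fin m₂) = m₁ + m₂ := by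
        simp
      rw [hcs]; omega
    intro U hU
    obtain ⟨⟨V, W⟩, hVW, rfl⟩ := Finset.mem_image.mp hU
    obtain ⟨hV, hW⟩ := Finset.mem_product.mp hVW
    set Uf := V.map ⟨Sum.inl, Sum.inl_injective⟩ ∪ W.map ⟨Sum.inr, Sum.inr_injective⟩ with hUf
    obtain ⟨g₁, hg₁⟩ := (isPartOfBasis_iff _).mp (hMP V hV)
    obtain ⟨g₂, hg₂⟩ := (isPartOfBasis_iff _).mp (hMQ W hW)
    have hinlmem : ∀ i : Fin m₁, i ∉ V → (Sum.inl i : Fin m₁ ⊕ Fin m₂) ∉ Uf := by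
      intro i hi hmem
      rw [hUf, Finset.mem_union] at hmem
      rcases hmem with h | h
      · obtain ⟨a, ha, hae⟩ := Finset.mem_map.mp h
        simp only [Function.Embedding.coeFn_mk, Sum.inl.injEq] at hae
        exact hi (hae ▸ ha)
      · obtain ⟨a, _, hae⟩ := Finset.mem_map.mp h
        simp at hae
    have hinrmem : ∀ i : Fin m₂, i ∉ W → (Sum.inr i : Fin m₁ ⊕ Fin m₂) ∉ Uf := by
      intro i hi hmem
      rw [hUf, Finset.mem_union] at hmem
      rcases hmem with h | h
      · obtain ⟨a, _, hae⟩ := Finset.mem_map.mp h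
        simp at hae
      · obtain ⟨a, ha, hae⟩ := Finset.mem_map.mp h
        simp only [Function.Embedding.coeFn_mk, Sum.inr.injEq] at hae
        exact hi (hae ▸ ha)
    set r₁ : ({x : Fin m₁ ⊕ Fin m₂ // x ∉ Uf} → ℤ) →ₗ[ℤ] ({i : Fin m₁ // i ∉ V} → ℤ) :=
      LinearMap.funLeft ℤ ℤ (fun i => ⟨Sum.inl i.1, hinlmem i.1 i.2⟩) with hr₁
    set r₂ : ({x : Fin m₁ ⊕ Fin m₂ // x ∉ Uf} → ℤ) →ₗ[ℤ] ({i : Fin m₂ // i ∉ W} → ℤ) :=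
      LinearMap.funLeft ℤ ℤ (fun i => ⟨Sum.inr i.1, hinrmem i.1 i.2⟩) with hr₂
    refine (isPartOfBasis_iff _).mpr ⟨LinearMap.pi (fun j =>
      Sum.elim (fun j₁ => LinearMap.proj j₁ ∘ₗ g₁ ∘ₗ r₁)
        (fun j₂ => LinearMap.proj j₂ ∘ₗ g₂ ∘ₗ r₂) (finSumFinEquiv.symm j)), fun j' => ?_⟩
    funext j
    rw [LinearMap.pi_apply]
    rcases hj : finSumFinEquiv.symm j with j₁ | j₂ <;>
      rcases hj' : finSumFinEquiv.symm j' with a | a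
    all_goals
      have hjj := (Equiv.symm_apply_eq finSumFinEquiv).mp hj
      have hjj' := (Equiv.symm_apply_eq finSumFinEquiv).mp hj'
    -- case (inl j₁, inl a)
    · have hcol : r₁ (fun p : {x : Fin m₁ ⊕ Fin m₂ // x ∉ Uf} => MU p.1 j')
          = fun i : {i : Fin m₁ // i ∉ V} => MP i.1 a := by
        funext i
        simp [hr₁, LinearMap.funLeft_apply, hMU, hj']
      simp only [Sum.elim_inl, LinearMap.comp_apply, LinearMap.proj_apply, hcol, hg₁]
      rw [Pi.single_apply, Pi.single_apply]
      have hiff : (j₁ = a) ↔ (j = j') := by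
        rw [hjj, hjj', Equiv.apply_eq_iff_eq]
        exact ⟨fun h => h ▸ rfl, fun h => Sum.inl.inj h⟩
      exact if_congr hiff rfl rfl
    -- case (inl j₁, inr a)
    · have hcol : r₁ (fun p : {x : Fin m₁ ⊕ Fin m₂ // x ∉ Uf} => MU p.1 j')
          = (0 : {i : Fin m₁ // i ∉ V} → ℤ) := by
        funext i
        simp [hr₁, LinearMap.funLeft_apply, hMU, hj']
      simp only [Sum.elim_inl, LinearMap.comp_apply, LinearMap.proj_apply, hcol, map_zero,
        Pi.zero_apply]
      have hne : j ≠ j' := by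
        intro h; rw [h, hj'] at hj; exact absurd hj (by simp)
      rw [Pi.single_apply]
      exact (if_neg hne).symm
    -- case (inr j₂, inl a)
    · have hcol : r₂ (fun p : {x : Fin m₁ ⊕ Fin m₂ // x ∉ Uf} => MU p.1 j')
          = (0 : {i : Fin m₂ // i ∉ W} → ℤ) := by
        funext i
        simp [hr₂, LinearMap.funLeft_apply, hMU, hj']
      simp only [Sum.elim_inr, LinearMap.comp_apply, LinearMap.proj_apply, hcol, map_zero,
        Pi.zero_apply]
      have hne : j ≠ j' := by
        intro h; rw [h, hj'] at hj; exact absurd hj (by simp)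
      rw [Pi.single_apply]
      exact (if_neg hne).symm
    -- case (inr j₂, inr a)
    · have hcol : r₂ (fun p : {x : Fin m₁ ⊕ Fin m₂ // x ∉ Uf} => MU p.1 j')
          = fun i : {i : Fin m₂ // i ∉ W} => MQ i.1 a := by
        funext i
        simp [hr₂, LinearMap.funLeft_apply, hMU, hj']
      simp only [Sum.elim_inr, LinearMap.comp_apply, LinearMap.proj_apply, hcol, hg₂]
      rw [Pi.single_apply, Pi.single_apply]
      have hiff : (j₂ = a) ↔ (j = j') := by
        rw [hjj, hjj', Equiv.apply_eq_iff_eq]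
        exact ⟨fun h => h ▸ rfl, fun h => Sum.inr.inj h⟩
      exact if_congr hiff rfl rfl
  · -- upper bound
    have hub1 : buch (Fin m₁ ⊕ Fin m₂) (prodVerts m₁ m₂ vertsP vertsQ) ≤
        buch (Fin m₁) vertsP + (m₂ - n₂) := by
      obtain ⟨t, M', hst, hcondP⟩ := upper_aux vertsP W₀ _ MS (by
        intro V hV
        exact (isPartOfBasis_iff _).mp (hMS _ (hmemprod V hV W₀ hW₀)))
      rw [card_compl_eq W₀ (hQ W₀ hW₀)] at hst
      have htle : t ≤ buch (Fin m₁) vertsP := by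
        refine le_buch _ _ _ ?_ M' ?_
        · obtain ⟨h, hh⟩ := hcondP V₀ hV₀
          calc t ≤ Fintype.card {i : Fin m₁ // i ∉ V₀} := card_le_of_leftInv _ h hh
            _ ≤ Fintype.card (Fin m₁) := Fintype.card_subtype_le _
        · intro V hV
          exact (isPartOfBasis_iff _).mpr (hcondP V hV)
      omega
    have hub2 : buch (Fin m₁ ⊕ Fin m₂) (prodVerts m₁ m₂ vertsP vertsQ) ≤
        buch (Fin m₂) vertsQ + (m₁ - n₁) := by
      obtain ⟨t, M', hst, hcondQ⟩ := upper_aux vertsQ V₀ _ (fun x => MS x.swap) (by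
        intro W hW
        set Uf := V₀.map ⟨Sum.inl, Sum.inl_injective⟩ ∪ W.map ⟨Sum.inr, Sum.inr_injective⟩
          with hUf
        set Uf' := W.map ⟨Sum.inl, Sum.inl_injective⟩ ∪ V₀.map ⟨Sum.inr, Sum.inr_injective⟩
          with hUf'
        obtain ⟨g₀, hg₀⟩ := (isPartOfBasis_iff _).mp (hMS _ (hmemprod V₀ hV₀ W hW))
        have hψmem : ∀ x : Fin m₁ ⊕ Fin m₂, x ∉ Uf → x.swap ∉ Uf' := by
          intro x hx hmem
          apply hx
          rcases x with i | i
          · rw [hUf', Finset.mem_union] at hmem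
            rcases hmem with h | h
            · obtain ⟨a, _, hae⟩ := Finset.mem_map.mp h
              simp at hae
            · obtain ⟨a, ha, hae⟩ := Finset.mem_map.mp h
              simp only [Function.Embedding.coeFn_mk, Sum.swap_inl, Sum.inr.injEq] at hae
              exact Finset.mem_union_left _ (Finset.mem_map_of_mem _ (hae ▸ ha))
          · rw [hUf', Finset.mem_union] at hmem
            rcases hmem with h | h
            · obtain ⟨a, ha, hae⟩ := Finset.mem_map.mp h
              simp only [Function.Embedding.coeFn_mk, Sum.swap_inr, Sum.inl.injEq] at hae
              exact Finset.mem_union_right _ (Finset.mem_map_of_mem _ (hae ▸ ha))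
            · obtain ⟨a, _, hae⟩ := Finset.mem_map.mp h
              simp at hae
        refine ⟨g₀ ∘ₗ LinearMap.funLeft ℤ ℤ
          (fun q : {x : Fin m₁ ⊕ Fin m₂ // x ∉ Uf} =>
            (⟨q.1.swap, hψmem q.1 q.2⟩ : {x : Fin m₂ ⊕ Fin m₁ // x ∉ Uf'})), fun j => ?_⟩
        rw [LinearMap.comp_apply]
        have hfl : (LinearMap.funLeft ℤ ℤ
            (fun q : {x : Fin m₁ ⊕ Fin m₂ // x ∉ Uf} =>
              (⟨q.1.swap, hψmem q.1 q.2⟩ : {x : Fin m₂ ⊕ Fin m₁ // x ∉ Uf'})))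
            (fun p : {x : Fin m₂ ⊕ Fin m₁ // x ∉ Uf'} => MS p.1.swap j)
            = fun q : {x : Fin m₁ ⊕ Fin m₂ // x ∉ Uf} => MS q.1 j := by
          funext q
          rw [LinearMap.funLeft_apply]
          simp [Sum.swap_swap]
        rw [hfl, hg₀])
      rw [card_compl_eq V₀ (hP V₀ hV₀)] at hst
      have htle : t ≤ buch (Fin m₂) vertsQ := by
        refine le_buch _ _ _ ?_ M' ?_
        · obtain ⟨h, hh⟩ := hcondQ W₀ hW₀
          calc t ≤ Fintype.card {i : Fin m₂ // i ∉ W₀} := card_le_of_leftInv _ h hh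
            _ ≤ Fintype.card (Fin m₂) := Fintype.card_subtype_le _
        · intro W hW
          exact (isPartOfBasis_iff _).mpr (hcondQ W hW)
      omega
    omega
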